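/- If the crucial part equals the whole BGP, completeness holds: for any BGP P, set C of completeness statements, and graph G, if cruc(P, C, G) = P then C, G ⊨ Compl(P). -/

import Mathlib

/-- Constants (IRIs/literals) -/
abbrev Const := ℕ
/-- Variables -/
abbrev Var := ℕ

/-- A term is a constant or a variable. -/
inductive Term where
  | c : Const → Term
  | v : Var → Term
deriving DecidableEq

/-- Triple pattern -/
abbrev TP := Term × Term × Term
/-- Basic graph pattern (also used for graphs, as sets of ground triple patterns) -/
abbrev BGP := Set TP
/-- (Partial) mapping from variables to constants -/
abbrev Mapping := Var → Option Const

def termVars : Term → Set Var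
  | .c _ => ∅
  | .v x => {x}

def tpVars (t : TP) : Set Var := termVars t.1 ∪ termVars t.2.1 ∪ termVars t.2.2

def bgpVars (P : BGP) : Set Var := ⋃ t ∈ P, tpVars t

def termConsts : Term → Set Const
  | .c a => {a}
  | .v _ => ∅

def tpConsts (t : TP) : Set Const := termConsts t.1 ∪ termConsts t.2.1 ∪ termConsts t.2.2

def bgpConsts (P : BGP) : Set Const := ⋃ t ∈ P, tpConsts t

/-- A graph is a BGP all of whose triples are ground. -/
def GroundBGP (P : BGP) : Prop := ∀ t ∈ P, tpVars t = ∅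

def applyTerm (μ : Mapping) : Term → Term
  | .c a => .c a
  | .v x =>
    match μ x with
    | some a => .c a
    | none => .v x

def applyTP (μ : Mapping) (t : TP) : TP :=
  (applyTerm μ t.1, applyTerm μ t.2.1, applyTerm μ t.2.2)

def applyBGP (μ : Mapping) (P : BGP) : BGP := applyTP μ '' P

/-- Domain of a mapping -/
def mdom (μ : Mapping) : Set Var := {x | μ x ≠ none}

/-- Evaluation of a BGP over a graph: ⟦P⟧_G = {μ | dom(μ) = var(P), μP ⊆ G}. -/
def bgpEval (P G : BGP) : Set Mapping := {μ | mdom μ = bgpVars P ∧ applyBGP μ P ⊆ G}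

/-- A completeness statement Compl(P_C). -/
structure CS where
  pat : BGP

/-- The CONSTRUCT query associated to a completeness statement. -/
def constructQ (C : CS) (G : BGP) : BGP := ⋃ μ ∈ bgpEval C.pat G, applyBGP μ C.pat

/-- Transfer operator T_𝒞. -/
def transfer (𝒞 : Set CS) (G : BGP) : BGP := ⋃ C ∈ 𝒞, constructQ C G

/-- (G, G') is a valid extension pair wrt 𝒞. -/
def Valid (𝒞 : Set CS) (G G' : BGP) : Prop :=
  G ⊆ G' ∧ GroundBGP G' ∧ transfer 𝒞 G' ⊆ G

/-- 𝒞, G ⊨ Compl(P). -/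
def Entails (𝒞 : Set CS) (G : BGP) (P : BGP) : Prop :=
  ∀ G', Valid 𝒞 G G' → bgpEval P G' = bgpEval P G

def emptyMap : Mapping := fun _ => none

/-- Union of two mappings (left-biased; used on mappings with disjoint domains). -/
def munion (μ ν : Mapping) : Mapping := fun x => (μ x).orElse (fun _ => ν x)

/-- Partially mapped BGP -/
abbrev PMBGP := BGP × Mapping

/-- Evaluation of a partially mapped BGP: ⟦(P, ν)⟧_G = {ν ∪ ρ | ρ ∈ ⟦P⟧_G}. -/
def evalPM (pm : PMBGP) (G : BGP) : Set Mapping :=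
  {σ | ∃ ρ ∈ bgpEval pm.1 G, σ = munion pm.2 ρ}

def evalPMSet (S : Set PMBGP) (G : BGP) : Set Mapping := ⋃ pm ∈ S, evalPM pm G

/-- S ≡_{𝒞,G} S' : equal evaluations over every valid extension pair. -/
def EquivCG (𝒞 : Set CS) (G : BGP) (S S' : Set PMBGP) : Prop :=
  ∀ G', Valid 𝒞 G G' → evalPMSet S G' = evalPMSet S' G'

/-- The freeze mapping, sending each variable to a (fresh) constant. -/
def freezeMap (frz : Var → Const) : Mapping := fun x => some (frz x)

/-- frz is a genuine freeze mapping: injective and its values are fresh. -/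
def Fresh (frz : Var → Const) (𝒞 : Set CS) (G P : BGP) : Prop :=
  Function.Injective frz ∧
    ∀ x, frz x ∉ bgpConsts G ∪ bgpConsts P ∪ ⋃ C ∈ 𝒞, bgpConsts C.pat

/-- Crucial part: cruc(P, 𝒞, G) = P ∩ id̃⁻¹(T_𝒞(P̃ ∪ G)). -/
def cruc (P : BGP) (𝒞 : Set CS) (G : BGP) (frz : Var → Const) : BGP :=
  {t | t ∈ P ∧ applyTP (freezeMap frz) t ∈ transfer 𝒞 (applyBGP (freezeMap frz) P ∪ G)}

/-- Equivalent partial grounding operator. -/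
def epg (pm : PMBGP) (𝒞 : Set CS) (G : BGP) (frz : Var → Const) : Set PMBGP :=
  {q | ∃ μ ∈ bgpEval (cruc pm.1 𝒞 G frz) G, q = (applyBGP μ pm.1, munion pm.2 μ)}

/-- A partially mapped BGP is saturated wrt 𝒞 and G. -/
def Saturated (pm : PMBGP) (𝒞 : Set CS) (G : BGP) (frz : Var → Const) : Prop :=
  epg pm 𝒞 G frz = {pm}

/-- Partially mapped BGPs reachable from (P, ∅) by the saturation algorithm's epg steps. -/
inductive Reach (𝒞 : Set CS) (G : BGP) (frz : Var → Const) (P : BGP) : PMBGP → Prop where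
  | init : Reach 𝒞 G frz P (P, emptyMap)
  | step {pm pm' : PMBGP} : Reach 𝒞 G frz P pm → epg pm 𝒞 G frz ≠ {pm} →
      pm' ∈ epg pm 𝒞 G frz → Reach 𝒞 G frz P pm'

/-- The set Ω of mappings returned by the saturation algorithm sat(P, 𝒞, G). -/
def satSet (𝒞 : Set CS) (G : BGP) (frz : Var → Const) (P : BGP) : Set Mapping :=
  {ν | ∃ P', Reach 𝒞 G frz P (P', ν) ∧ Saturated (P', ν) 𝒞 G frz}

-- Unfreezing constant map: frozen constants go to μ's value, others fixed.
open Classical in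
noncomputable def hfun (frz : Var → Const) (μ : Mapping) (a : Const) : Const :=
  if h : ∃ x, frz x = a then (μ h.choose).getD a else a

noncomputable def hTerm (frz : Var → Const) (μ : Mapping) : Term → Term
  | .c a => .c (hfun frz μ a)
  | .v x => .v x

noncomputable def hTP (frz : Var → Const) (μ : Mapping) (t : TP) : TP :=
  (hTerm frz μ t.1, hTerm frz μ t.2.1, hTerm frz μ t.2.2)

lemma hfun_fix {frz : Var → Const} {μ : Mapping} {a : Const}
    (h : ∀ x, frz x ≠ a) : hfun frz μ a = a := by
  unfold hfun
  classical
  rw [dif_neg]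
  rintro ⟨x, hx⟩
  exact h x hx

lemma hfun_frz {frz : Var → Const} (hinj : Function.Injective frz) {μ : Mapping}
    {x : Var} {a : Const} (hx : μ x = some a) : hfun frz μ (frz x) = a := by
  unfold hfun
  rw [dif_pos ⟨x, rfl⟩]
  have hsp := (⟨x, rfl⟩ : ∃ y, frz y = frz x).choose_spec
  rw [hinj hsp, hx]
  rfl

lemma hTerm_freeze {frz : Var → Const} (hinj : Function.Injective frz) {μ : Mapping}
    {s : Term}
    (hc : ∀ a ∈ termConsts s, ∀ x, frz x ≠ a)
    (hv : ∀ x ∈ termVars s, ∃ a, μ x = some a) :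
    hTerm frz μ (applyTerm (freezeMap frz) s) = applyTerm μ s := by
  cases s with
  | c a => simp [applyTerm, hTerm, hfun_fix (hc a (by simp [termConsts]))]
  | v x =>
    obtain ⟨a, ha⟩ := hv x (by simp [termVars])
    simp [applyTerm, freezeMap, hTerm, hfun_frz hinj ha, ha]

lemma hTerm_fix {frz : Var → Const} {μ : Mapping} {s : Term} (hs : termVars s = ∅)
    (hc : ∀ a ∈ termConsts s, ∀ x, frz x ≠ a) : hTerm frz μ s = s := by
  cases s with
  | c a => simp [hTerm, hfun_fix (hc a (by simp [termConsts]))]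
  | v x => simp [termVars] at hs

lemma hTerm_apply {frz : Var → Const} {μ ν : Mapping} {s : Term}
    (hc : ∀ a ∈ termConsts s, ∀ x, frz x ≠ a)
    (hv : ∀ x ∈ termVars s, ∃ a, ν x = some a) :
    hTerm frz μ (applyTerm ν s) = applyTerm (fun x => (ν x).map (hfun frz μ)) s := by
  cases s with
  | c a => simp [applyTerm, hTerm, hfun_fix (hc a (by simp [termConsts]))]
  | v x =>
    obtain ⟨a, ha⟩ := hv x (by simp [termVars])
    simp [applyTerm, ha, hTerm]

lemma tpConsts_mem {t : TP} : ∀ a, (a ∈ termConsts t.1 → a ∈ tpConsts t) ∧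
    (a ∈ termConsts t.2.1 → a ∈ tpConsts t) ∧ (a ∈ termConsts t.2.2 → a ∈ tpConsts t) := by
  intro a
  unfold tpConsts
  refine ⟨fun h => ?_, fun h => ?_, fun h => ?_⟩ <;> simp [h]

lemma tpVars_mem {t : TP} : ∀ x, (x ∈ termVars t.1 → x ∈ tpVars t) ∧
    (x ∈ termVars t.2.1 → x ∈ tpVars t) ∧ (x ∈ termVars t.2.2 → x ∈ tpVars t) := by
  intro x
  unfold tpVars
  refine ⟨fun h => ?_, fun h => ?_, fun h => ?_⟩ <;> simp [h]

lemma hTP_freeze {frz : Var → Const} (hinj : Function.Injective frz) {μ : Mapping}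
    {t : TP}
    (hc : ∀ a ∈ tpConsts t, ∀ x, frz x ≠ a)
    (hv : ∀ x ∈ tpVars t, ∃ a, μ x = some a) :
    hTP frz μ (applyTP (freezeMap frz) t) = applyTP μ t := by
  unfold hTP applyTP
  refine Prod.ext ?_ (Prod.ext ?_ ?_) <;> simp only
  · exact hTerm_freeze hinj (fun a ha => hc a ((tpConsts_mem a).1 ha))
      (fun x hx => hv x ((tpVars_mem x).1 hx))
  · exact hTerm_freeze hinj (fun a ha => hc a ((tpConsts_mem a).2.1 ha))
      (fun x hx => hv x ((tpVars_mem x).2.1 hx))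
  · exact hTerm_freeze hinj (fun a ha => hc a ((tpConsts_mem a).2.2 ha))
      (fun x hx => hv x ((tpVars_mem x).2.2 hx))

lemma hTP_fix {frz : Var → Const} {μ : Mapping} {t : TP} (ht : tpVars t = ∅)
    (hc : ∀ a ∈ tpConsts t, ∀ x, frz x ≠ a) : hTP frz μ t = t := by
  have hv1 : termVars t.1 = ∅ := by
    have : termVars t.1 ⊆ tpVars t := fun x hx => (tpVars_mem x).1 hx
    rw [ht] at this; exact Set.subset_empty_iff.mp this
  have hv2 : termVars t.2.1 = ∅ := by
    have : termVars t.2.1 ⊆ tpVars t := fun x hx => (tpVars_mem x).2.1 hx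
    rw [ht] at this; exact Set.subset_empty_iff.mp this
  have hv3 : termVars t.2.2 = ∅ := by
    have : termVars t.2.2 ⊆ tpVars t := fun x hx => (tpVars_mem x).2.2 hx
    rw [ht] at this; exact Set.subset_empty_iff.mp this
  unfold hTP
  refine Prod.ext ?_ (Prod.ext ?_ ?_) <;> simp only
  · exact hTerm_fix hv1 (fun a ha => hc a ((tpConsts_mem a).1 ha))
  · exact hTerm_fix hv2 (fun a ha => hc a ((tpConsts_mem a).2.1 ha))
  · exact hTerm_fix hv3 (fun a ha => hc a ((tpConsts_mem a).2.2 ha))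

lemma hTP_apply {frz : Var → Const} {μ ν : Mapping} {t : TP}
    (hc : ∀ a ∈ tpConsts t, ∀ x, frz x ≠ a)
    (hv : ∀ x ∈ tpVars t, ∃ a, ν x = some a) :
    hTP frz μ (applyTP ν t) = applyTP (fun x => (ν x).map (hfun frz μ)) t := by
  unfold hTP applyTP
  refine Prod.ext ?_ (Prod.ext ?_ ?_) <;> simp only
  · exact hTerm_apply (fun a ha => hc a ((tpConsts_mem a).1 ha))
      (fun x hx => hv x ((tpVars_mem x).1 hx))
  · exact hTerm_apply (fun a ha => hc a ((tpConsts_mem a).2.1 ha))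
      (fun x hx => hv x ((tpVars_mem x).2.1 hx))
  · exact hTerm_apply (fun a ha => hc a ((tpConsts_mem a).2.2 ha))
      (fun x hx => hv x ((tpVars_mem x).2.2 hx))

/-- If the crucial part equals the whole BGP, then 𝒞, G ⊨ Compl(P). -/
theorem stmt13 (𝒞 : Set CS) (G : BGP) (frz : Var → Const) (P : BGP)
    (hg : GroundBGP G) (hfresh : Fresh frz 𝒞 G P)
    (hcruc : cruc P 𝒞 G frz = P) :
    Entails 𝒞 G P := by
  obtain ⟨hinj, hfr⟩ := hfresh
  rintro G' ⟨hGG', hgG', htrans⟩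
  apply Set.eq_of_subset_of_subset
  · rintro μ ⟨hdom, hsub⟩
    refine ⟨hdom, ?_⟩
    rintro tt ⟨t, htP, rfl⟩
    -- facts about μ on vars/consts of P
    have hcP : ∀ {s : TP}, s ∈ P → ∀ a ∈ tpConsts s, ∀ x, frz x ≠ a := by
      intro s hs a ha x hx
      exact hfr x (by subst hx; left; right; exact Set.mem_biUnion hs ha)
    have hvP : ∀ {s : TP}, s ∈ P → ∀ x ∈ tpVars s, ∃ a, μ x = some a := by
      intro s hs x hx
      have : x ∈ mdom μ := by rw [hdom]; exact Set.mem_biUnion hs hx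
      cases hμx : μ x with
      | none => exact absurd hμx this
      | some a => exact ⟨a, rfl⟩
    -- use cruc = P
    have ht' : t ∈ cruc P 𝒞 G frz := by rw [hcruc]; exact htP
    obtain ⟨-, hmem⟩ := ht'
    simp only [transfer, constructQ, Set.mem_iUnion, exists_prop] at hmem
    obtain ⟨C, hC𝒞, ν, hνeval, u, huC, hut⟩ := hmem
    obtain ⟨hνdom, hνsub⟩ := hνeval
    -- facts about ν and C.pat
    have hcC : ∀ {s : TP}, s ∈ C.pat → ∀ a ∈ tpConsts s, ∀ x, frz x ≠ a := by
      intro s hs a ha x hx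
      refine hfr x (by subst hx; right; exact Set.mem_biUnion hC𝒞 (Set.mem_biUnion hs ha))
    have hvC : ∀ {s : TP}, s ∈ C.pat → ∀ x ∈ tpVars s, ∃ a, ν x = some a := by
      intro s hs x hx
      have : x ∈ mdom ν := by rw [hνdom]; exact Set.mem_biUnion hs hx
      cases hνx : ν x with
      | none => exact absurd hνx this
      | some a => exact ⟨a, rfl⟩
    have hcG : ∀ {s : TP}, s ∈ G → ∀ a ∈ tpConsts s, ∀ x, frz x ≠ a := by
      intro s hs a ha x hx
      exact hfr x (by subst hx; left; left; exact Set.mem_biUnion hs ha)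
    -- define ν' = h ∘ ν
    set ν' : Mapping := fun x => (ν x).map (hfun frz μ) with hν'
    -- h maps (P̃ ∪ G) into G'
    have hmap : ∀ s ∈ applyBGP (freezeMap frz) P ∪ G, hTP frz μ s ∈ G' := by
      rintro s (⟨p, hpP, rfl⟩ | hsG)
      · rw [hTP_freeze hinj (hcP hpP) (hvP hpP)]
        exact hsub ⟨p, hpP, rfl⟩
      · rw [hTP_fix (hg s hsG) (hcG hsG)]
        exact hGG' hsG
    -- ν' evaluates C.pat into G'
    have hν'dom : mdom ν' = bgpVars C.pat := by
      rw [← hνdom]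
      ext x
      simp only [mdom, hν', Set.mem_setOf_eq]
      exact not_congr Option.map_eq_none_iff
    have hν'sub : applyBGP ν' C.pat ⊆ G' := by
      rintro s ⟨w, hwC, rfl⟩
      rw [← hTP_apply (hcC hwC) (hvC hwC)]
      exact hmap _ (hνsub ⟨w, hwC, rfl⟩)
    -- conclude
    have key : applyTP ν' u ∈ transfer 𝒞 G' := by
      refine Set.mem_biUnion hC𝒞 ?_
      exact Set.mem_biUnion (⟨hν'dom, hν'sub⟩ : ν' ∈ bgpEval C.pat G') ⟨u, huC, rfl⟩
    have heq : applyTP μ t = applyTP ν' u := by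
      rw [← hTP_apply (hcC huC) (hvC huC), hut,
        hTP_freeze hinj (hcP htP) (hvP htP)]
    rw [heq]
    exact htrans key
  · rintro μ ⟨hdom, hsub⟩
    exact ⟨hdom, hsub.trans hGG'⟩
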